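/- Let a, b > 0. Set α₁ = (ab/(a+b)²)·(a − b − 2√(a² + ab + b²)) and α₂ = (ab/(a+b)²)·(a − b + 2√(a² + ab + b²)). Then α₁ and α₂ are exactly the two roots of the quadratic equation 3a²b² + 2a²bα − 2ab²α − a²α² − 2abα² − b²α² = 0, and they satisfy −b < α₁ < 0 < α₂ < a (so both corresponding confocal conics C_{α₁}, C_{α₂} are ellipses of the Minkowski-plane confocal family). -/

import Mathlib

/-- Caustics of `3`-periodic billiard trajectories in the Minkowski plane:
the two numbers `α₁, α₂` are exactly the roots of the stated quadratic, and
both lie in `(−b, a)`, so both caustics are ellipses of the confocal family. -/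
theorem three_periodic_caustics (a b : ℝ) (ha : 0 < a) (hb : 0 < b)
    (α₁ α₂ : ℝ)
    (h₁ : α₁ = a * b / (a + b) ^ 2 * (a - b - 2 * Real.sqrt (a ^ 2 + a * b + b ^ 2)))
    (h₂ : α₂ = a * b / (a + b) ^ 2 * (a - b + 2 * Real.sqrt (a ^ 2 + a * b + b ^ 2))) :
    (∀ α : ℝ,
      3 * a ^ 2 * b ^ 2 + 2 * a ^ 2 * b * α - 2 * a * b ^ 2 * α
        - a ^ 2 * α ^ 2 - 2 * a * b * α ^ 2 - b ^ 2 * α ^ 2 = 0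
      ↔ α = α₁ ∨ α = α₂) ∧
    -b < α₁ ∧ α₁ < 0 ∧ 0 < α₂ ∧ α₂ < a := by
  set s := Real.sqrt (a ^ 2 + a * b + b ^ 2) with hs_def
  have habpos : (0:ℝ) < (a + b) ^ 2 := by positivity
  have habne : ((a + b) ^ 2 : ℝ) ≠ 0 := ne_of_gt habpos
  have hs0 : 0 ≤ s := Real.sqrt_nonneg _
  have hs2 : s ^ 2 = a ^ 2 + a * b + b ^ 2 := by
    rw [hs_def, Real.sq_sqrt]; positivity
  have hspos : 0 < s := by nlinarith
  have hsgt : a - b < 2 * s := by nlinarith [sq_nonneg (a - b)]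
  have hsgt' : b - a < 2 * s := by nlinarith [sq_nonneg (a - b)]
  constructor
  · intro α
    have key : 3 * a ^ 2 * b ^ 2 + 2 * a ^ 2 * b * α - 2 * a * b ^ 2 * α
        - a ^ 2 * α ^ 2 - 2 * a * b * α ^ 2 - b ^ 2 * α ^ 2
        = -((a + b) ^ 2) * ((α - α₁) * (α - α₂)) := by
      rw [h₁, h₂]
      field_simp
      linear_combination (-4*a^2*b^2) * hs2
    rw [key]
    constructor
    · intro h
      have : (α - α₁) * (α - α₂) = 0 := by
        have := mul_eq_zero.mp (by linarith [h] : (-((a + b) ^ 2)) * ((α - α₁) * (α - α₂)) = 0)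
        rcases this with h' | h'
        · exact absurd h' (by simpa using habne)
        · exact h'
      rcases mul_eq_zero.mp this with h' | h'
      · left; linarith
      · right; linarith
    · rintro (rfl | rfl) <;> ring
  refine ⟨?_, ?_, ?_, ?_⟩
  · -- -b < α₁, i.e. a*(a-b-2s) > -(a+b)^2, i.e. 2a^2+ab+b^2 > 2as
    rw [h₁]
    rw [div_mul_eq_mul_div, lt_div_iff₀ habpos]
    have h2as : 2 * a * s < 2 * a ^ 2 + a * b + b ^ 2 := by
      nlinarith [hs2, sq_nonneg (2 * a * s - (2 * a ^ 2 + a * b + b ^ 2)), sq_nonneg (b * (a + b)), mul_pos ha hspos, mul_pos hb hb]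
    nlinarith
  · rw [h₁]
    have : a - b - 2 * s < 0 := by linarith
    have hpos : 0 < a * b / (a + b) ^ 2 := by positivity
    nlinarith
  · rw [h₂]
    have : 0 < a - b + 2 * s := by linarith
    have hpos : 0 < a * b / (a + b) ^ 2 := by positivity
    nlinarith
  · -- α₂ < a : b*(a-b+2s) < (a+b)^2, i.e. 2bs < a^2+ab+2b^2
    rw [h₂]
    rw [div_mul_eq_mul_div, div_lt_iff₀ habpos]
    have h2bs : 2 * b * s < a ^ 2 + a * b + 2 * b ^ 2 := by
      nlinarith [hs2, sq_nonneg (2 * b * s - (a ^ 2 + a * b + 2 * b ^ 2)), sq_nonneg (a * (a + b)), mul_pos hb hspos, mul_pos ha ha]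
    nlinarith
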